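/- Let x^k, y^k ≥ 0 and admissible controls r^k (k ∈ ℕ) be such that x^k → x^∞, y^k → y^∞ as k → ∞, and r^k → r^∞ weak* in L^∞([0,∞)), i.e. ∫₀^∞ g(t) r^k(t) dt → ∫₀^∞ g(t) r^∞(t) dt for every integrable g : [0,∞) → ℝ. Let S^k, I^k be the solution of the controlled SIR system with control r^k and initial data (x^k, y^k), and let S^∞, I^∞ be the solution with control r^∞ and initial data (x^∞, y^∞). Then S^k(t) → S^∞(t) and I^k(t) → I^∞(t) uniformly for t in every bounded subinterval of [0,∞). -/

import Mathlib

open MeasureTheory Set Filter Topology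
open scoped Classical

noncomputable section

/-- An admissible vaccination-rate control: a measurable `r : ℝ → ℝ` with
`0 ≤ r t ≤ 1` for a.e. `t ≥ 0`. -/
def Admissible (r : ℝ → ℝ) : Prop :=
  Measurable r ∧ ∀ᵐ t : ℝ ∂volume, 0 ≤ t → 0 ≤ r t ∧ r t ≤ 1

/-- `S, I` is a solution of the controlled SIR system with parameters `β, γ`,
control `r`, and initial data `x, y`:  they are continuous on `[0,∞)` and satisfy
`S t = x - ∫₀ᵗ (β S I + r S)` and `I t = y + ∫₀ᵗ (β S I - γ I)` for all `t ≥ 0`. -/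
def IsSIRSol (β γ : ℝ) (r : ℝ → ℝ) (x y : ℝ) (S I : ℝ → ℝ) : Prop :=
  ContinuousOn S (Ici 0) ∧ ContinuousOn I (Ici 0) ∧
  (∀ t : ℝ, 0 ≤ t → S t = x - ∫ s in (0:ℝ)..t, (β * S s * I s + r s * S s)) ∧
  (∀ t : ℝ, 0 ≤ t → I t = y + ∫ s in (0:ℝ)..t, (β * S s * I s - γ * I s))

/-- The susceptible component `S^r` of the solution of the controlled SIR system
(chosen via choice; it is unique on `[0,∞)`). -/
def sirS (β γ : ℝ) (r : ℝ → ℝ) (x y : ℝ) : ℝ → ℝ :=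
  if h : ∃ p : (ℝ → ℝ) × (ℝ → ℝ), IsSIRSol β γ r x y p.1 p.2 then h.choose.1 else 0

/-- The infected component `I^r` of the solution of the controlled SIR system. -/
def sirI (β γ : ℝ) (r : ℝ → ℝ) (x y : ℝ) : ℝ → ℝ :=
  if h : ∃ p : (ℝ → ℝ) × (ℝ → ℝ), IsSIRSol β γ r x y p.1 p.2 then h.choose.2 else 0

/-- The eradication time `u^r(x,y) = min { t ≥ 0 : I^r(t) = μ }`. -/
def eradTime (β γ μ : ℝ) (r : ℝ → ℝ) (x y : ℝ) : ℝ :=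
  sInf {t : ℝ | 0 ≤ t ∧ sirI β γ r x y t = μ}

/-- The value function `u(x,y) = inf { u^r(x,y) : r admissible }`. -/
def value (β γ μ : ℝ) (x y : ℝ) : ℝ :=
  sInf {T : ℝ | ∃ r : ℝ → ℝ, Admissible r ∧ T = eradTime β γ μ r x y}

/-- The triangle `T_{N,δ} = {(x,y) : x ≥ δ, y ≥ μ + δ, x + y ≤ N}`. -/
def Triangle (μ N δ : ℝ) : Set (ℝ × ℝ) :=
  {p : ℝ × ℝ | δ ≤ p.1 ∧ μ + δ ≤ p.2 ∧ p.1 + p.2 ≤ N}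

/-- The partial derivative `∂ₓ u^r(z,w)` of the eradication time. -/
def uDx (β γ μ : ℝ) (r : ℝ → ℝ) (z w : ℝ) : ℝ :=
  deriv (fun a => eradTime β γ μ r a w) z

/-- The partial derivative `∂_y u^r(z,w)` of the eradication time. -/
def uDy (β γ μ : ℝ) (r : ℝ → ℝ) (z w : ℝ) : ℝ :=
  deriv (fun b => eradTime β γ μ r z b) w

/-- The switching control `r_τ`: `0` on `[0,τ]` and `1` on `(τ,∞)`. -/
def switchCtrl (τ : ℝ) : ℝ → ℝ := fun t => if t ≤ τ then 0 else 1

lemma gronwall_int {f : ℝ → ℝ} {a K c d : ℝ} (hK : 0 ≤ K) (ha : 0 ≤ a)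
    (hf : ContinuousOn f (Icc c d))
    (hle : ∀ t ∈ Icc c d, f t ≤ a + K * ∫ s in c..t, f s) :
    ∀ t ∈ Icc c d, f t ≤ a * Real.exp (K * (t - c)) := by
  intro t ht
  rcases le_or_gt t c with h | hct
  · have htc : t = c := le_antisymm h ht.1
    subst htc
    simpa using (hle t ⟨le_refl t, ht.2⟩).trans_eq (by simp)
  have hcd : c ≤ d := ht.1.trans ht.2
  have hintIcc : ∀ u ∈ Icc c d, IntervalIntegrable f volume c u := by
    intro u hu
    apply ContinuousOn.intervalIntegrable
    apply hf.mono
    rw [uIcc_of_le hu.1]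
    exact Icc_subset_Icc le_rfl hu.2
  set F : ℝ → ℝ := fun u => a + K * ∫ s in c..u, f s with hFdef
  have hFc : ContinuousOn F (Icc c d) := by
    apply continuousOn_const.add (ContinuousOn.const_smul ?_ K)
    have := intervalIntegral.continuousOn_primitive_interval
      (f := f) (μ := volume) (a := c) (b := d) ?_
    · rwa [uIcc_of_le hcd] at this
    · rw [uIcc_of_le hcd]
      exact hf.integrableOn_compact isCompact_Icc
  set h : ℝ → ℝ := fun u => F u * Real.exp (-K * (u - c)) with hhdef
  have hderiv : ∀ u ∈ Ioo c d, HasDerivAt h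
      ((K * f u) * Real.exp (-K * (u - c)) + F u * (-K * Real.exp (-K * (u - c)))) u := by
    intro u hu
    have hnb : Icc c d ∈ 𝓝 u := Icc_mem_nhds hu.1 hu.2
    have hF' : HasDerivAt F (K * f u) u := by
      have hmeas : StronglyMeasurableAtFilter f (𝓝 u) volume :=
        ContinuousOn.stronglyMeasurableAtFilter isOpen_Ioo (hf.mono Ioo_subset_Icc_self) u hu
      have := intervalIntegral.integral_hasDerivAt_right (hintIcc u ⟨hu.1.le, hu.2.le⟩)
        hmeas (hf.continuousAt hnb)
      exact (this.const_mul K).const_add a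
    have hexp : HasDerivAt (fun u => Real.exp (-K * (u - c))) (-K * Real.exp (-K * (u - c))) u := by
      have h1 : HasDerivAt (fun u : ℝ => -K * (u - c)) (-K) u := by
        simpa using ((hasDerivAt_id u).sub_const c).const_mul (-K)
      simpa [mul_comm, Function.comp_def] using (Real.hasDerivAt_exp (-K * (u - c))).comp u h1
    exact hF'.mul hexp
  have hanti : AntitoneOn h (Icc c d) := by
    apply antitoneOn_of_deriv_nonpos (convex_Icc c d)
    · exact hFc.mul (Real.continuous_exp.comp (by fun_prop)).continuousOn
    · intro u hu
      rw [interior_Icc] at hu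
      exact ((hderiv u hu).differentiableAt).differentiableWithinAt
    · intro u hu
      rw [interior_Icc] at hu
      rw [(hderiv u hu).deriv]
      have hfu : f u ≤ F u := hle u ⟨hu.1.le, hu.2.le⟩
      have hexp : 0 < Real.exp (-K * (u - c)) := Real.exp_pos _
      nlinarith [mul_le_mul_of_nonneg_left hfu hK]
  have hhc : h c = a := by simp [hhdef, hFdef]
  have := hanti ⟨le_rfl, hcd⟩ ht hct.le
  rw [hhc] at this
  have hFt : f t ≤ F t := hle t ht
  have hexp : 0 < Real.exp (-K * (t - c)) := Real.exp_pos _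
  have h2 : F t ≤ a * Real.exp (K * (t - c)) := by
    have h3 := mul_le_mul_of_nonneg_right this (Real.exp_pos (K * (t - c))).le
    calc F t = F t * Real.exp (-K * (t - c)) * Real.exp (K * (t - c)) := by
          rw [mul_assoc, ← Real.exp_add]; ring_nf; simp
      _ ≤ a * Real.exp (K * (t - c)) := h3
  linarith

lemma intInt_helper {F : ℝ → ℝ} {c t C : ℝ} (hct : c ≤ t)
    (hmeas : AEStronglyMeasurable F (volume.restrict (Ioc c t)))
    (hbd : ∀ᵐ s ∂(volume.restrict (Ioc c t)), |F s| ≤ C) :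
    IntervalIntegrable F volume c t := by
  rw [intervalIntegrable_iff_integrableOn_Ioc_of_le hct]
  exact Integrable.mono' (integrableOn_const (C := C) measure_Ioc_lt_top.ne) hmeas
    (hbd.mono fun s hs => by simpa using hs)

/-- a.e. bounds for an admissible control on `Ioc c t` with `0 ≤ c`. -/
lemma admissible_ae_Ioc {r : ℝ → ℝ} (hr : Admissible r) {c t : ℝ} (hc : 0 ≤ c) :
    ∀ᵐ s ∂(volume.restrict (Ioc c t)), 0 ≤ r s ∧ r s ≤ 1 := by
  filter_upwards [ae_restrict_of_ae hr.2, ae_restrict_mem measurableSet_Ioc] with s h1 h2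
  exact h1 (hc.trans h2.1.le)

/-- AESM of a continuous-on-`Ici 0` function on a sub-Ioc. -/
lemma aesm_Ioc {F : ℝ → ℝ} (hF : ContinuousOn F (Ici 0)) {c t : ℝ} (hc : 0 ≤ c) :
    AEStronglyMeasurable F (volume.restrict (Ioc c t)) :=
  (hF.aestronglyMeasurable measurableSet_Ici).mono_measure
    (Measure.restrict_mono (fun s hs => hc.trans hs.1.le) le_rfl)

lemma sir_bounds {β γ : ℝ} (hβ : 0 < β) (hγ : 0 < γ) {r : ℝ → ℝ} (hr : Admissible r)
    {x y : ℝ} (hx : 0 ≤ x) (hy : 0 ≤ y) {S I : ℝ → ℝ} (h : IsSIRSol β γ r x y S I)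
    {T : ℝ} (hT : 0 ≤ T) :
    ∀ t ∈ Icc (0:ℝ) T, 0 ≤ S t ∧ S t ≤ x ∧ 0 ≤ I t ∧ I t ≤ y * Real.exp (β * x * T) := by
  obtain ⟨hScont, hIcont, hSeq, hIeq⟩ := h
  have hsub : Icc (0:ℝ) T ⊆ Ici 0 := fun s hs => hs.1
  -- bounds for |S| and |I| on the compact interval
  obtain ⟨CS, hCS⟩ := isCompact_Icc.exists_bound_of_continuousOn (hScont.mono hsub)
  obtain ⟨CI, hCI⟩ := isCompact_Icc.exists_bound_of_continuousOn (hIcont.mono hsub)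
  simp only [Real.norm_eq_abs] at hCS hCI
  have hCS0 : 0 ≤ CS := le_trans (abs_nonneg _) (hCS 0 ⟨le_rfl, hT⟩)
  have hCI0 : 0 ≤ CI := le_trans (abs_nonneg _) (hCI 0 ⟨le_rfl, hT⟩)
  -- interval integrability of the S-integrand
  have hSint : ∀ c t : ℝ, 0 ≤ c → c ≤ t → t ≤ T →
      IntervalIntegrable (fun s => β * S s * I s + r s * S s) volume c t := by
    intro c t hc hct htT
    apply intInt_helper hct
    · exact ((aestronglyMeasurable_const.mul (aesm_Ioc hScont hc)).mul (aesm_Ioc hIcont hc)).add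
        ((hr.1.aestronglyMeasurable.mono_measure (Measure.restrict_le_self)).mul (aesm_Ioc hScont hc))
    · filter_upwards [admissible_ae_Ioc hr hc, ae_restrict_mem measurableSet_Ioc] with s hs hmem
      have hmem' : s ∈ Icc (0:ℝ) T := ⟨hc.trans hmem.1.le, hmem.2.trans htT⟩
      have h1 := hCS s hmem'; have h2 := hCI s hmem'
      calc |β * S s * I s + r s * S s| ≤ |β * S s * I s| + |r s * S s| := abs_add_le _ _
        _ ≤ β * CS * CI + 1 * CS := by
            rw [abs_mul, abs_mul, abs_mul, abs_of_pos hβ]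
            gcongr
            · rw [abs_le]; constructor <;> linarith [hs.1, hs.2]
        _ = β * CS * CI + CS := by ring
  -- interval integrability of the I-integrand (continuous)
  have hIint : ∀ c t : ℝ, 0 ≤ c → c ≤ t → t ≤ T →
      IntervalIntegrable (fun s => β * S s * I s - γ * I s) volume c t := by
    intro c t hc hct htT
    apply ContinuousOn.intervalIntegrable
    rw [uIcc_of_le hct]
    have : Icc c t ⊆ Ici 0 := fun s hs => hc.trans hs.1
    exact ((continuousOn_const.mul (hScont.mono this)).mul (hIcont.mono this)).sub
      (continuousOn_const.mul (hIcont.mono this))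
  -- Step 1: I ≥ 0 on [0, T]
  have hInn : ∀ t ∈ Icc (0:ℝ) T, 0 ≤ I t := by
    by_contra hcon
    push_neg at hcon
    obtain ⟨t₀, ht₀, hIt₀⟩ := hcon
    set A := {t : ℝ | t ∈ Icc 0 t₀ ∧ I t ∈ Ici 0} with hA
    have hI0 : I 0 = y := by simpa using hIeq 0 le_rfl
    have hA0 : (0:ℝ) ∈ A := ⟨⟨le_rfl, ht₀.1⟩, by simpa [hI0] using hy⟩
    have hAne : A.Nonempty := ⟨0, hA0⟩
    have hAbdd : BddAbove A := ⟨t₀, fun u hu => hu.1.2⟩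
    have hAclosed : IsClosed A := by
      have : ContinuousOn I (Icc 0 t₀) := hIcont.mono (fun s hs => hs.1)
      exact this.preimage_isClosed_of_isClosed isClosed_Icc isClosed_Ici
    set c := sSup A with hc
    have hcA : c ∈ A := hAclosed.csSup_mem hAne hAbdd
    have hc0 : 0 ≤ c := hcA.1.1
    have hct₀ : c ≤ t₀ := hcA.1.2
    have hcT : c ≤ T := hct₀.trans ht₀.2
    have hne : c ≠ t₀ := fun he => by rw [he] at hcA; exact absurd hcA.2 (not_le.2 hIt₀)
    have hclt : c < t₀ := lt_of_le_of_ne hct₀ hne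
    have hIneg : ∀ u ∈ Ioc c t₀, I u < 0 := by
      intro u hu
      by_contra hge
      push_neg at hge
      exact absurd (le_csSup hAbdd ⟨⟨hc0.trans hu.1.le, hu.2⟩, hge⟩) (not_le.2 hu.1)
    have hIc : I c = 0 := by
      refine le_antisymm ?_ hcA.2
      have : ContinuousWithinAt I (Icc c t₀) c :=
        (hIcont.mono (fun s hs => hc0.trans hs.1)) c ⟨le_rfl, hct₀⟩
      have hlim : Tendsto I (𝓝[Ioc c t₀] c) (𝓝 (I c)) :=
        this.mono Ioc_subset_Icc_self |>.tendsto
      have hnb : (𝓝[Ioc c t₀] c).NeBot := by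
        rw [nhdsWithin_Ioc_eq_nhdsGT hclt]
        exact nhdsGT_neBot c
      exact le_of_tendsto hlim (eventually_nhdsWithin_of_forall fun u hu => (hIneg u hu).le)
    -- Gronwall on [c, t₀] for |I|
    have key : ∀ t ∈ Icc c t₀, |I t| ≤ 0 * Real.exp ((β * CS + γ) * (t - c)) := by
      apply gronwall_int (by positivity) le_rfl
      · exact (hIcont.mono (fun s hs => hc0.trans hs.1)).abs
      · intro t ht
        have h1 : I t - I c = ∫ s in c..t, (β * S s * I s - γ * I s) := by
          rw [hIeq t (hc0.trans ht.1), hIeq c hc0]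
          rw [← intervalIntegral.integral_add_adjacent_intervals
            (hIint 0 c le_rfl hc0 hcT) (hIint c t hc0 ht.1 (ht.2.trans (ht₀.2)))]
          ring
        rw [hIc, sub_zero] at h1
        rw [h1, zero_add]
        calc |∫ s in c..t, (β * S s * I s - γ * I s)|
            ≤ ∫ s in c..t, |β * S s * I s - γ * I s| := by
              apply intervalIntegral.abs_integral_le_integral_abs ht.1
          _ ≤ ∫ s in c..t, (β * CS + γ) * |I s| := by
              apply intervalIntegral.integral_mono_on ht.1
                ((hIint c t hc0 ht.1 (ht.2.trans ht₀.2)).abs)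
                (by
                  apply ContinuousOn.intervalIntegrable
                  rw [uIcc_of_le ht.1]
                  exact continuousOn_const.mul (hIcont.mono (fun s hs => hc0.trans hs.1)).abs)
              intro s hs
              have hmem : s ∈ Icc (0:ℝ) T := ⟨hc0.trans hs.1, (hs.2.trans ht.2).trans ht₀.2⟩
              have h1 := hCS s hmem
              calc |β * S s * I s - γ * I s| ≤ |β * S s * I s| + |γ * I s| := abs_sub _ _
                _ = β * |S s| * |I s| + γ * |I s| := by
                    rw [abs_mul, abs_mul, abs_mul, abs_of_pos hβ, abs_of_pos hγ]
                _ ≤ β * CS * |I s| + γ * |I s| := by gcongr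
                _ = (β * CS + γ) * |I s| := by ring
          _ = (β * CS + γ) * ∫ s in c..t, |I s| := by
              rw [intervalIntegral.integral_const_mul]
    have := key t₀ ⟨hct₀, le_rfl⟩
    simp at this
    rw [this] at hIt₀
    exact lt_irrefl 0 hIt₀
  -- Step 2: S ≥ 0 on [0, T]
  have hSnn : ∀ t ∈ Icc (0:ℝ) T, 0 ≤ S t := by
    by_contra hcon
    push_neg at hcon
    obtain ⟨t₀, ht₀, hSt₀⟩ := hcon
    set A := {t : ℝ | t ∈ Icc 0 t₀ ∧ S t ∈ Ici 0} with hA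
    have hS0 : S 0 = x := by simpa using hSeq 0 le_rfl
    have hA0 : (0:ℝ) ∈ A := ⟨⟨le_rfl, ht₀.1⟩, by simpa [hS0] using hx⟩
    have hAne : A.Nonempty := ⟨0, hA0⟩
    have hAbdd : BddAbove A := ⟨t₀, fun u hu => hu.1.2⟩
    have hAclosed : IsClosed A :=
      (hScont.mono (fun s hs => hs.1)).preimage_isClosed_of_isClosed isClosed_Icc isClosed_Ici
    set c := sSup A with hc
    have hcA : c ∈ A := hAclosed.csSup_mem hAne hAbdd
    have hc0 : 0 ≤ c := hcA.1.1
    have hct₀ : c ≤ t₀ := hcA.1.2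
    have hcT : c ≤ T := hct₀.trans ht₀.2
    have hne : c ≠ t₀ := fun he => by rw [he] at hcA; exact absurd hcA.2 (not_le.2 hSt₀)
    have hclt : c < t₀ := lt_of_le_of_ne hct₀ hne
    have hSneg : ∀ u ∈ Ioc c t₀, S u < 0 := by
      intro u hu
      by_contra hge
      push_neg at hge
      exact absurd (le_csSup hAbdd ⟨⟨hc0.trans hu.1.le, hu.2⟩, hge⟩) (not_le.2 hu.1)
    have hSc : S c = 0 := by
      refine le_antisymm ?_ hcA.2
      have hcw : ContinuousWithinAt S (Icc c t₀) c :=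
        (hScont.mono (fun s hs => hc0.trans hs.1)) c ⟨le_rfl, hct₀⟩
      have hlim : Tendsto S (𝓝[Ioc c t₀] c) (𝓝 (S c)) :=
        hcw.mono Ioc_subset_Icc_self |>.tendsto
      have hnb : (𝓝[Ioc c t₀] c).NeBot := by
        rw [nhdsWithin_Ioc_eq_nhdsGT hclt]
        exact nhdsGT_neBot c
      exact le_of_tendsto hlim (eventually_nhdsWithin_of_forall fun u hu => (hSneg u hu).le)
    have key : ∀ t ∈ Icc c t₀, |S t| ≤ 0 * Real.exp ((β * CI + 1) * (t - c)) := by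
      apply gronwall_int (by positivity) le_rfl
      · exact (hScont.mono (fun s hs => hc0.trans hs.1)).abs
      · intro t ht
        have htT : t ≤ T := ht.2.trans ht₀.2
        have h1 : S t = - ∫ s in c..t, (β * S s * I s + r s * S s) := by
          have h2 := hSeq t (hc0.trans ht.1)
          have h3 := hSeq c hc0
          rw [← intervalIntegral.integral_add_adjacent_intervals
            (hSint 0 c le_rfl hc0 hcT) (hSint c t hc0 ht.1 htT)] at h2
          have h4 : S c = 0 := hSc
          linarith [h2, h3, h4]
        rw [zero_add, h1, abs_neg]
        have habs : IntervalIntegrable (fun s => |β * S s * I s + r s * S s|) volume c t :=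
          (hSint c t hc0 ht.1 htT).abs
        have hSabs : IntegrableOn (fun s => (β * CI + 1) * |S s|) (Ioc c t) volume := by
          apply IntegrableOn.mono_set (t := Icc c t) ?_ Ioc_subset_Icc_self
          apply ContinuousOn.integrableOn_Icc
          exact continuousOn_const.mul (hScont.mono (fun s hs => hc0.trans hs.1)).abs
        calc |∫ s in c..t, (β * S s * I s + r s * S s)|
            ≤ ∫ s in c..t, |β * S s * I s + r s * S s| :=
              intervalIntegral.abs_integral_le_integral_abs ht.1
          _ = ∫ s in Ioc c t, |β * S s * I s + r s * S s| := by
              rw [intervalIntegral.integral_of_le ht.1]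
          _ ≤ ∫ s in Ioc c t, (β * CI + 1) * |S s| := by
              apply integral_mono_ae
                ((intervalIntegrable_iff_integrableOn_Ioc_of_le ht.1).1 habs) hSabs
              filter_upwards [admissible_ae_Ioc hr hc0, ae_restrict_mem measurableSet_Ioc]
                with s hs hmem
              have hmem' : s ∈ Icc (0:ℝ) T := ⟨hc0.trans hmem.1.le, hmem.2.trans htT⟩
              have h2 := hCI s hmem'
              calc |β * S s * I s + r s * S s| = |S s * (β * I s + r s)| := by ring_nf
                _ = |S s| * |β * I s + r s| := abs_mul _ _
                _ ≤ |S s| * (β * CI + 1) := by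
                    gcongr
                    rw [abs_le]
                    constructor
                    · nlinarith [abs_le.1 h2]
                    · nlinarith [abs_le.1 h2]
                _ = (β * CI + 1) * |S s| := by ring
          _ = ∫ s in c..t, (β * CI + 1) * |S s| := by
              rw [intervalIntegral.integral_of_le ht.1]
          _ = (β * CI + 1) * ∫ s in c..t, |S s| := intervalIntegral.integral_const_mul _ _
    have := key t₀ ⟨hct₀, le_rfl⟩
    simp at this
    rw [this] at hSt₀
    exact lt_irrefl 0 hSt₀
  -- Step 3: S ≤ x on [0, T]
  have hSx : ∀ t ∈ Icc (0:ℝ) T, S t ≤ x := by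
    intro t ht
    rw [hSeq t ht.1, sub_le_self_iff]
    rw [intervalIntegral.integral_of_le ht.1]
    apply integral_nonneg_of_ae
    filter_upwards [admissible_ae_Ioc hr le_rfl, ae_restrict_mem measurableSet_Ioc]
      with s hs hmem
    have hmem' : s ∈ Icc (0:ℝ) T := ⟨hmem.1.le, hmem.2.trans ht.2⟩
    have h1 := hSnn s hmem'
    have h2 := hInn s hmem'
    have := hs.1
    positivity
  -- Step 4: I ≤ y * exp (β x T) on [0, T]
  have hIy : ∀ t ∈ Icc (0:ℝ) T, I t ≤ y * Real.exp (β * x * T) := by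
    have key : ∀ t ∈ Icc (0:ℝ) T, I t ≤ y * Real.exp ((β * x) * (t - 0)) := by
      apply gronwall_int (by positivity) hy
      · exact hIcont.mono (fun s hs => hs.1)
      · intro t ht
        rw [hIeq t ht.1]
        have h5 : ∫ s in (0:ℝ)..t, (β * S s * I s - γ * I s)
            ≤ ∫ s in (0:ℝ)..t, (β * x) * I s := by
          apply intervalIntegral.integral_mono_on ht.1 (hIint 0 t le_rfl ht.1 ht.2)
            (by
              apply ContinuousOn.intervalIntegrable
              rw [uIcc_of_le ht.1]
              exact continuousOn_const.mul (hIcont.mono (fun s hs => hs.1)))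
          intro s hs
          have hmem' : s ∈ Icc (0:ℝ) T := ⟨hs.1, hs.2.trans ht.2⟩
          have h1 := hSx s hmem'
          have h2 := hInn s hmem'
          nlinarith [mul_nonneg (sub_nonneg.2 h1) h2, mul_nonneg hγ.le h2]
        rw [intervalIntegral.integral_const_mul] at h5
        linarith
    intro t ht
    have h6 := key t ht
    have h7 : Real.exp (β * x * (t - 0)) ≤ Real.exp (β * x * T) := by
      apply Real.exp_le_exp.2
      have h8 : β * x * (t - 0) = β * x * t := by ring
      rw [h8]
      exact mul_le_mul_of_nonneg_left ht.2 (by positivity)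
    have h9 := mul_le_mul_of_nonneg_left h7 hy
    linarith
  intro t ht
  exact ⟨hSnn t ht, hSx t ht, hInn t ht, hIy t ht⟩

lemma sir_S_int {β γ : ℝ} (hβ : 0 < β) {r : ℝ → ℝ} (hr : Admissible r)
    {x y : ℝ} {S I : ℝ → ℝ} (h : IsSIRSol β γ r x y S I)
    {c t T : ℝ} (hc : 0 ≤ c) (hct : c ≤ t) (htT : t ≤ T) :
    IntervalIntegrable (fun s => β * S s * I s + r s * S s) volume c t := by
  obtain ⟨hScont, hIcont, -, -⟩ := h
  obtain ⟨CS, hCS⟩ := isCompact_Icc.exists_bound_of_continuousOn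
    (hScont.mono (fun s hs => hs.1) : ContinuousOn S (Icc 0 T))
  obtain ⟨CI, hCI⟩ := isCompact_Icc.exists_bound_of_continuousOn
    (hIcont.mono (fun s hs => hs.1) : ContinuousOn I (Icc 0 T))
  simp only [Real.norm_eq_abs] at hCS hCI
  apply intInt_helper hct
  · exact ((aestronglyMeasurable_const.mul (aesm_Ioc hScont hc)).mul (aesm_Ioc hIcont hc)).add
      ((hr.1.aestronglyMeasurable.mono_measure Measure.restrict_le_self).mul (aesm_Ioc hScont hc))
  · filter_upwards [admissible_ae_Ioc hr hc, ae_restrict_mem measurableSet_Ioc] with s hs hmem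
    have hmem' : s ∈ Icc (0:ℝ) T := ⟨hc.trans hmem.1.le, hmem.2.trans htT⟩
    have h1 := hCS s hmem'
    have h2 := hCI s hmem'
    calc |β * S s * I s + r s * S s| ≤ |β * S s * I s| + |r s * S s| := abs_add_le _ _
      _ ≤ β * CS * CI + 1 * CS := by
          rw [abs_mul, abs_mul, abs_mul, abs_of_pos hβ]
          have h3 : |r s| ≤ 1 := by rw [abs_le]; constructor <;> linarith [hs.1, hs.2]
          have h4 := abs_nonneg (S s)
          have h5 := abs_nonneg (I s)
          have h6 := abs_nonneg (r s)
          have hCS0 : 0 ≤ CS := (abs_nonneg _).trans h1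
          have hCI0 : 0 ≤ CI := (abs_nonneg _).trans h2
          nlinarith [mul_le_mul h1 h2 h5 hCS0, mul_le_mul h3 h1 h4 (by norm_num : (0:ℝ) ≤ 1)]
      _ = β * CS * CI + CS := by ring

lemma sir_I_int {β γ : ℝ} {r : ℝ → ℝ}
    {x y : ℝ} {S I : ℝ → ℝ} (h : IsSIRSol β γ r x y S I)
    {c t : ℝ} (hc : 0 ≤ c) (hct : c ≤ t) :
    IntervalIntegrable (fun s => β * S s * I s - γ * I s) volume c t := by
  obtain ⟨hScont, hIcont, -, -⟩ := h
  apply ContinuousOn.intervalIntegrable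
  rw [uIcc_of_le hct]
  have hsub : Icc c t ⊆ Ici 0 := fun s hs => hc.trans hs.1
  exact ((continuousOn_const.mul (hScont.mono hsub)).mul (hIcont.mono hsub)).sub
    (continuousOn_const.mul (hIcont.mono hsub))


lemma unif_small {G : ℕ → ℝ → ℝ} {B T : ℝ} (hB : 0 < B) (hT : 0 < T)
    (hlip : ∀ k, ∀ t ∈ Icc (0:ℝ) T, ∀ t' ∈ Icc (0:ℝ) T, |G k t - G k t'| ≤ B * |t - t'|)
    (hpt : ∀ t ∈ Icc (0:ℝ) T, Tendsto (fun k => G k t) atTop (𝓝 0)) :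
    ∀ ε > 0, ∀ᶠ k in atTop, ∀ t ∈ Icc (0:ℝ) T, |G k t| < ε := by
  intro ε hε
  obtain ⟨n, hn⟩ := exists_nat_gt (2 * B * T / ε)
  have hn0 : 0 < (n:ℝ) := lt_of_le_of_lt (by positivity) hn
  have hBTn : B * (T / n) < ε / 2 := by
    rw [div_lt_iff₀ hε] at hn
    rw [mul_div_assoc'] at *
    rw [div_lt_iff₀ hn0]
    nlinarith
  have hgrid : ∀ᶠ k in atTop, ∀ j ∈ Finset.range (n + 1), |G k (j * T / n)| < ε / 2 := by
    rw [Filter.eventually_all_finset]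
    intro j hj
    have hjn : (j:ℝ) ≤ n := by exact_mod_cast Nat.lt_succ_iff.1 (Finset.mem_range.1 hj)
    have hmem : (j:ℝ) * T / n ∈ Icc (0:ℝ) T := by
      constructor
      · positivity
      · rw [div_le_iff₀ hn0]; nlinarith
    obtain ⟨N, hN⟩ := Metric.tendsto_atTop.1 (hpt _ hmem) (ε / 2) (by positivity)
    filter_upwards [eventually_ge_atTop N] with k hk
    have := hN k hk
    rwa [Real.dist_eq, sub_zero] at this
  filter_upwards [hgrid] with k hk t ht
  set j : ℕ := ⌊t * n / T⌋₊ with hjdef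
  have hjle : (j:ℝ) ≤ t * n / T := Nat.floor_le (by have h0 := ht.1; positivity)
  have hjlt : t * n / T < (j:ℝ) + 1 := Nat.lt_floor_add_one _
  have hjle' : (j:ℝ) * T ≤ t * n := by rwa [le_div_iff₀ hT] at hjle
  have hjlt' : t * n < ((j:ℝ) + 1) * T := by rwa [div_lt_iff₀ hT] at hjlt
  have hjn : j ∈ Finset.range (n + 1) := by
    rw [Finset.mem_range, Nat.lt_succ_iff]
    have : t * n / T ≤ (n:ℝ) := by
      rw [div_le_iff₀ hT]; nlinarith [ht.2, hn0]
    calc j = ⌊t * n / T⌋₊ := hjdef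
      _ ≤ ⌊(n:ℝ)⌋₊ := Nat.floor_mono this
      _ = n := Nat.floor_natCast n
  have hjnR : (j:ℝ) ≤ n := by exact_mod_cast Nat.lt_succ_iff.1 (Finset.mem_range.1 hjn)
  have hgm : (j:ℝ) * T / n ∈ Icc (0:ℝ) T := by
    constructor
    · positivity
    · rw [div_le_iff₀ hn0]; nlinarith
  have h1 : (j:ℝ) * T / n ≤ t := (div_le_iff₀ hn0).2 (by nlinarith)
  have h2 : t - (j:ℝ) * T / n ≤ T / n := by
    rw [sub_le_iff_le_add, ← add_div]
    exact (le_div_iff₀ hn0).2 (by nlinarith)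
  have hlip' := hlip k t ht _ hgm
  have habs : |t - (j:ℝ) * T / n| = t - (j:ℝ) * T / n := abs_of_nonneg (by linarith)
  rw [habs] at hlip'
  have hGg := hk j hjn
  have htri : |G k t| ≤ |G k t - G k ((j:ℝ) * T / n)| + |G k ((j:ℝ) * T / n)| := by
    calc |G k t| = |(G k t - G k ((j:ℝ) * T / n)) + G k ((j:ℝ) * T / n)| := by ring_nf
      _ ≤ _ := abs_add_le _ _
  have : B * (t - (j:ℝ) * T / n) ≤ B * (T / n) := by gcongr
  linarith

set_option maxHeartbeats 2000000 in
/-- Stability of solutions of the controlled SIR system under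
convergence of the initial data and weak* convergence of the controls. -/
theorem controlled_SIR_stability
    (β γ : ℝ) (hβ : 0 < β) (hγ : 0 < γ)
    (x y : ℕ → ℝ) (xl yl : ℝ)
    (hx0 : ∀ k, 0 ≤ x k) (hy0 : ∀ k, 0 ≤ y k) (hxl : 0 ≤ xl) (hyl : 0 ≤ yl)
    (r : ℕ → ℝ → ℝ) (rl : ℝ → ℝ)
    (hr : ∀ k, Admissible (r k)) (hrl : Admissible rl)
    (hxconv : Tendsto x atTop (𝓝 xl)) (hyconv : Tendsto y atTop (𝓝 yl))
    (hweak : ∀ g : ℝ → ℝ, Integrable g (volume.restrict (Ici 0)) →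
      Tendsto (fun k => ∫ t in Ici (0:ℝ), g t * r k t) atTop
        (𝓝 (∫ t in Ici (0:ℝ), g t * rl t)))
    (S I : ℕ → ℝ → ℝ) (hsol : ∀ k, IsSIRSol β γ (r k) (x k) (y k) (S k) (I k))
    (Sl Il : ℝ → ℝ) (hsoll : IsSIRSol β γ rl xl yl Sl Il) :
    ∀ T : ℝ, 0 < T →
      TendstoUniformlyOn (fun k t => S k t) Sl atTop (Icc 0 T) ∧
      TendstoUniformlyOn (fun k t => I k t) Il atTop (Icc 0 T) := by
  intro T hT
  -- global bounds on initial data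
  obtain ⟨X₀, hX₀⟩ := hxconv.bddAbove_range
  obtain ⟨Y₀, hY₀⟩ := hyconv.bddAbove_range
  set X := max X₀ xl with hXdef
  set Y := max Y₀ yl with hYdef
  have hxX : ∀ k, x k ≤ X := fun k => (hX₀ (mem_range_self k)).trans (le_max_left _ _)
  have hyY : ∀ k, y k ≤ Y := fun k => (hY₀ (mem_range_self k)).trans (le_max_left _ _)
  have hxlX : xl ≤ X := le_max_right _ _
  have hylY : yl ≤ Y := le_max_right _ _
  have hX0 : 0 ≤ X := hxl.trans hxlX
  have hY0 : 0 ≤ Y := hyl.trans hylY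
  set B := X + Y * Real.exp (β * X * T) + 1 with hBdef
  have hB : 0 < B := by positivity
  -- uniform bounds on solutions
  have hIbnd : ∀ (x' y' : ℝ) (r' : ℝ → ℝ) (S' I' : ℝ → ℝ), 0 ≤ x' → 0 ≤ y' → x' ≤ X → y' ≤ Y →
      Admissible r' → IsSIRSol β γ r' x' y' S' I' →
      ∀ t ∈ Icc (0:ℝ) T, |S' t| ≤ B ∧ |I' t| ≤ B := by
    intro x' y' r' S' I' hx' hy' hxX' hyY' hr' hsol' t ht
    obtain ⟨h1, h2, h3, h4⟩ := sir_bounds hβ hγ hr' hx' hy' hsol' hT.le t ht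
    have hYe : 0 ≤ Y * Real.exp (β * X * T) := by positivity
    have h5 : y' * Real.exp (β * x' * T) ≤ Y * Real.exp (β * X * T) :=
      mul_le_mul hyY' (Real.exp_le_exp.2 (by nlinarith [mul_nonneg (mul_nonneg hβ.le (sub_nonneg.2 hxX')) hT.le])) (Real.exp_pos _).le hY0
    have hBeq : B = X + Y * Real.exp (β * X * T) + 1 := hBdef
    constructor
    · rw [abs_le]
      constructor
      · nlinarith
      · nlinarith
    · rw [abs_le]
      constructor
      · nlinarith
      · nlinarith
  have hbk : ∀ k, ∀ t ∈ Icc (0:ℝ) T, |S k t| ≤ B ∧ |I k t| ≤ B :=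
    fun k => hIbnd _ _ _ _ _ (hx0 k) (hy0 k) (hxX k) (hyY k) (hr k) (hsol k)
  have hbl : ∀ t ∈ Icc (0:ℝ) T, |Sl t| ≤ B ∧ |Il t| ≤ B :=
    hIbnd _ _ _ _ _ hxl hyl hxlX hylY hrl hsoll
  -- the weak-* error term
  have hGint : ∀ k, ∀ c t : ℝ, 0 ≤ c → c ≤ t → t ≤ T →
      IntervalIntegrable (fun s => (r k s - rl s) * Sl s) volume c t := by
    intro k c t hc hct htT
    apply intInt_helper (C := B) hct
    · exact ((((hr k).1.sub hrl.1).aestronglyMeasurable).mono_measure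
        Measure.restrict_le_self).mul (aesm_Ioc hsoll.1 hc)
    · filter_upwards [admissible_ae_Ioc (hr k) hc, admissible_ae_Ioc hrl hc,
        ae_restrict_mem measurableSet_Ioc] with s h1 h2 hmem
      have hmem' : s ∈ Icc (0:ℝ) T := ⟨hc.trans hmem.1.le, hmem.2.trans htT⟩
      have h3 := (hbl s hmem').1
      rw [abs_mul]
      calc |r k s - rl s| * |Sl s| ≤ 1 * B := by
            apply mul_le_mul ?_ h3 (abs_nonneg _) (by norm_num)
            rw [abs_le]; constructor <;> linarith [h1.1, h1.2, h2.1, h2.2]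
        _ = B := one_mul B
  set G : ℕ → ℝ → ℝ := fun k t => ∫ s in (0:ℝ)..t, (r k s - rl s) * Sl s with hGdef
  have hGd : ∀ k, ∀ t' t : ℝ, 0 ≤ t' → t' ≤ t → t ≤ T → |G k t - G k t'| ≤ B * (t - t') := by
    intro k t' t ht' htt' htT
    have hsplit : G k t - G k t' = ∫ s in t'..t, (r k s - rl s) * Sl s := by
      rw [hGdef]
      simp only
      rw [← intervalIntegral.integral_add_adjacent_intervals
        (hGint k 0 t' le_rfl ht' (htt'.trans htT)) (hGint k t' t ht' htt' htT)]
      ring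
    rw [hsplit]
    calc |∫ s in t'..t, (r k s - rl s) * Sl s| ≤ ∫ s in t'..t, |(r k s - rl s) * Sl s| :=
        intervalIntegral.abs_integral_le_integral_abs htt'
      _ = ∫ s in Ioc t' t, |(r k s - rl s) * Sl s| := by
          rw [intervalIntegral.integral_of_le htt']
      _ ≤ ∫ _s in Ioc t' t, B := by
          apply integral_mono_ae ((intervalIntegrable_iff_integrableOn_Ioc_of_le htt').1
            (hGint k t' t ht' htt' htT).abs) (integrableOn_const measure_Ioc_lt_top.ne)
          filter_upwards [admissible_ae_Ioc (hr k) ht', admissible_ae_Ioc hrl ht',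
            ae_restrict_mem measurableSet_Ioc] with s h1 h2 hmem
          have hmem' : s ∈ Icc (0:ℝ) T := ⟨ht'.trans hmem.1.le, hmem.2.trans htT⟩
          have h3 := (hbl s hmem').1
          rw [abs_mul]
          calc |r k s - rl s| * |Sl s| ≤ 1 * B := by
                apply mul_le_mul ?_ h3 (abs_nonneg _) (by norm_num)
                rw [abs_le]; constructor <;> linarith [h1.1, h1.2, h2.1, h2.2]
            _ = B := one_mul B
      _ = B * (t - t') := by
          rw [setIntegral_const, Real.volume_real_Ioc_of_le htt']
          rw [smul_eq_mul, mul_comm]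
  have hGlip : ∀ k, ∀ t ∈ Icc (0:ℝ) T, ∀ t' ∈ Icc (0:ℝ) T, |G k t - G k t'| ≤ B * |t - t'| := by
    intro k t ht t' ht'
    rcases le_total t' t with h | h
    · rw [abs_of_nonneg (by linarith : (0:ℝ) ≤ t - t')]
      exact hGd k t' t ht'.1 h ht.2
    · rw [abs_sub_comm (G k t), abs_sub_comm t t',
        abs_of_nonneg (by linarith : (0:ℝ) ≤ t' - t)]
      exact hGd k t t' ht.1 h ht'.2
  -- products with the control are integrable
  have hprod : ∀ (ρ : ℝ → ℝ), Admissible ρ → ∀ t : ℝ, 0 ≤ t → t ≤ T →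
      IntegrableOn (fun s => Sl s * ρ s) (Ioc 0 t) volume := by
    intro ρ hρ t ht htT
    rw [← intervalIntegrable_iff_integrableOn_Ioc_of_le ht]
    apply intInt_helper (C := B) ht
    · exact (aesm_Ioc hsoll.1 le_rfl).mul
        (hρ.1.aestronglyMeasurable.mono_measure Measure.restrict_le_self)
    · filter_upwards [admissible_ae_Ioc hρ le_rfl, ae_restrict_mem measurableSet_Ioc]
        with s h1 hmem
      have hmem' : s ∈ Icc (0:ℝ) T := ⟨hmem.1.le, hmem.2.trans htT⟩
      have h3 := (hbl s hmem').1
      rw [abs_mul]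
      calc |Sl s| * |ρ s| ≤ B * 1 := by
            apply mul_le_mul h3 ?_ (abs_nonneg _) hB.le
            rw [abs_le]; constructor <;> linarith [h1.1, h1.2]
        _ = B := mul_one B
  -- pointwise convergence of G via weak-* convergence
  have hGpt : ∀ t ∈ Icc (0:ℝ) T, Tendsto (fun k => G k t) atTop (𝓝 0) := by
    intro t ht
    set g : ℝ → ℝ := (Ioc (0:ℝ) t).indicator Sl with hgdef
    have hIocIci : Ioc (0:ℝ) t ⊆ Ici 0 := fun s hs => hs.1.le
    have hSlInt : IntegrableOn Sl (Ioc 0 t) volume :=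
      ((hsoll.1.mono (fun s hs => hs.1 : Icc (0:ℝ) t ⊆ Ici 0)).integrableOn_Icc).mono_set
        Ioc_subset_Icc_self
    have hgint : Integrable g (volume.restrict (Ici 0)) := by
      rw [hgdef, integrable_indicator_iff measurableSet_Ioc]
      unfold IntegrableOn
      rw [Measure.restrict_restrict measurableSet_Ioc, inter_eq_self_of_subset_left hIocIci]
      exact hSlInt
    have hkey : ∀ ρ : ℝ → ℝ, (∫ s in Ici (0:ℝ), g s * ρ s) = ∫ s in Ioc (0:ℝ) t, Sl s * ρ s := by
      intro ρ
      have h1 : ∀ s, g s * ρ s = (Ioc (0:ℝ) t).indicator (fun u => Sl u * ρ u) s := by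
        intro s
        rw [hgdef]
        by_cases hs : s ∈ Ioc (0:ℝ) t
        · rw [indicator_of_mem hs, indicator_of_mem hs]
        · rw [indicator_of_notMem hs, indicator_of_notMem hs, zero_mul]
      simp_rw [h1]
      rw [integral_indicator measurableSet_Ioc,
        Measure.restrict_restrict measurableSet_Ioc, inter_eq_self_of_subset_left hIocIci]
    have hGeq : ∀ k, G k t = (∫ s in Ici (0:ℝ), g s * r k s) - ∫ s in Ici (0:ℝ), g s * rl s := by
      intro k
      rw [hkey (r k), hkey rl]
      have hGu' : G k t = ∫ s in (0:ℝ)..t, (r k s - rl s) * Sl s := rfl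
      rw [hGu', intervalIntegral.integral_of_le ht.1]
      have h2 : ∀ s, (r k s - rl s) * Sl s = Sl s * r k s - Sl s * rl s := fun s => by ring
      simp_rw [h2]
      exact integral_sub (hprod (r k) (hr k) t ht.1 ht.2) (hprod rl hrl t ht.1 ht.2)
    rw [show (fun k => G k t)
        = fun k => (∫ s in Ici (0:ℝ), g s * r k s) - ∫ s in Ici (0:ℝ), g s * rl s
      from funext hGeq]
    simpa using (hweak g hgint).sub_const (∫ s in Ici (0:ℝ), g s * rl s)
  have hGsmall := unif_small hB hT hGlip hGpt
  -- the main Gronwall estimate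
  set K : ℝ := 2 * β * B + 1 + γ with hKdef
  have hK : 0 < K := by positivity
  set E : ℝ := Real.exp (K * T) with hEdef
  have hE : 0 < E := Real.exp_pos _
  have claim : ∀ ε > 0, ∀ᶠ k in atTop, ∀ t ∈ Icc (0:ℝ) T,
      |S k t - Sl t| + |I k t - Il t| < ε := by
    intro ε hε
    set ε' : ℝ := ε / (3 * (E + 1)) with hε'def
    have hε' : 0 < ε' := by positivity
    have hxk : ∀ᶠ k in atTop, |x k - xl| < ε' := by
      obtain ⟨N, hN⟩ := Metric.tendsto_atTop.1 hxconv ε' hε'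
      filter_upwards [eventually_ge_atTop N] with k hk
      simpa [Real.dist_eq] using hN k hk
    have hyk : ∀ᶠ k in atTop, |y k - yl| < ε' := by
      obtain ⟨N, hN⟩ := Metric.tendsto_atTop.1 hyconv ε' hε'
      filter_upwards [eventually_ge_atTop N] with k hk
      simpa [Real.dist_eq] using hN k hk
    filter_upwards [hxk, hyk, hGsmall ε' hε'] with k h1 h2 h3 t ht
    have hsubIci : Icc (0:ℝ) T ⊆ Ici 0 := fun s hs => hs.1
    have hfcont : ContinuousOn (fun u => |S k u - Sl u| + |I k u - Il u|) (Icc 0 T) :=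
      (((hsol k).1.mono hsubIci).sub (hsoll.1.mono hsubIci)).abs.add
        (((hsol k).2.1.mono hsubIci).sub (hsoll.2.1.mono hsubIci)).abs
    have hle : ∀ u ∈ Icc (0:ℝ) T, |S k u - Sl u| + |I k u - Il u|
        ≤ 3 * ε' + K * ∫ s in (0:ℝ)..u, (|S k s - Sl s| + |I k s - Il s|) := by
      intro u hu
      have hu0 := hu.1
      have huT := hu.2
      have hAk := sir_S_int hβ (hr k) (hsol k) le_rfl hu0 huT
      have hAl := sir_S_int hβ hrl hsoll le_rfl hu0 huT
      have hBk := sir_I_int (hsol k) le_rfl hu0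
      have hBl := sir_I_int hsoll le_rfl hu0
      have hGu := hGint k 0 u le_rfl hu0 huT
      set H : ℝ → ℝ := fun s => (β * S k s * I k s + r k s * S k s)
        - (β * Sl s * Il s + rl s * Sl s) - (r k s - rl s) * Sl s with hHdef
      have hHint : IntervalIntegrable H volume 0 u := (hAk.sub hAl).sub hGu
      have hfInt : IntegrableOn (fun s => |S k s - Sl s| + |I k s - Il s|) (Ioc 0 u) volume :=
        ((hfcont.mono (Icc_subset_Icc le_rfl huT)).integrableOn_Icc).mono_set Ioc_subset_Icc_self
      -- split the S-difference
      have hsplit : (∫ s in (0:ℝ)..u, (β * S k s * I k s + r k s * S k s))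
          - (∫ s in (0:ℝ)..u, (β * Sl s * Il s + rl s * Sl s))
          = (∫ s in (0:ℝ)..u, H s) + G k u := by
        have hGu' : G k u = ∫ s in (0:ℝ)..u, (r k s - rl s) * Sl s := rfl
        rw [hGu', ← intervalIntegral.integral_sub hAk hAl,
          ← intervalIntegral.integral_add hHint (hGint k 0 u le_rfl hu0 huT)]
        apply intervalIntegral.integral_congr
        intro s _
        rw [hHdef]
        ring
      have hSdiff : S k u - Sl u = (x k - xl) - ((∫ s in (0:ℝ)..u, H s) + G k u) := by
        rw [(hsol k).2.2.1 u hu0, hsoll.2.2.1 u hu0, ← hsplit]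
        ring
      -- bound |∫ H|
      have hHbnd : |∫ s in (0:ℝ)..u, H s|
          ≤ (β * B + 1) * ∫ s in (0:ℝ)..u, (|S k s - Sl s| + |I k s - Il s|) := by
        calc |∫ s in (0:ℝ)..u, H s| ≤ ∫ s in (0:ℝ)..u, |H s| :=
              intervalIntegral.abs_integral_le_integral_abs hu0
          _ = ∫ s in Ioc 0 u, |H s| := by rw [intervalIntegral.integral_of_le hu0]
          _ ≤ ∫ s in Ioc 0 u, (β * B + 1) * (|S k s - Sl s| + |I k s - Il s|) := by
              apply integral_mono_ae
                ((intervalIntegrable_iff_integrableOn_Ioc_of_le hu0).1 hHint.abs)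
                (hfInt.const_mul _)
              filter_upwards [admissible_ae_Ioc (hr k) le_rfl,
                ae_restrict_mem measurableSet_Ioc] with s hrs hmem
              have hmem' : s ∈ Icc (0:ℝ) T := ⟨hmem.1.le, hmem.2.trans huT⟩
              have hb1 := (hbk k s hmem').1
              have hb2 := (hbl s hmem').2
              have hident : H s = β * S k s * (I k s - Il s) + β * Il s * (S k s - Sl s)
                  + r k s * (S k s - Sl s) := by rw [hHdef]; ring
              rw [hident]
              have e1 : |β * S k s * (I k s - Il s)| ≤ β * B * |I k s - Il s| := by
                rw [abs_mul, abs_mul, abs_of_pos hβ]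
                nlinarith [mul_nonneg (mul_nonneg hβ.le (sub_nonneg.2 hb1))
                  (abs_nonneg (I k s - Il s))]
              have e2 : |β * Il s * (S k s - Sl s)| ≤ β * B * |S k s - Sl s| := by
                rw [abs_mul, abs_mul, abs_of_pos hβ]
                nlinarith [mul_nonneg (mul_nonneg hβ.le (sub_nonneg.2 hb2))
                  (abs_nonneg (S k s - Sl s))]
              have e3 : |r k s * (S k s - Sl s)| ≤ 1 * |S k s - Sl s| := by
                rw [abs_mul]
                apply mul_le_mul_of_nonneg_right ?_ (abs_nonneg _)
                rw [abs_le]; constructor <;> linarith [hrs.1, hrs.2]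
              have e4 : |β * S k s * (I k s - Il s) + β * Il s * (S k s - Sl s)
                  + r k s * (S k s - Sl s)|
                  ≤ |β * S k s * (I k s - Il s)| + |β * Il s * (S k s - Sl s)|
                    + |r k s * (S k s - Sl s)| := abs_add_three _ _ _
              have hBB : 0 ≤ β * B := by positivity
              nlinarith [abs_nonneg (I k s - Il s), abs_nonneg (S k s - Sl s),
                mul_nonneg hBB (abs_nonneg (I k s - Il s))]
          _ = ∫ s in (0:ℝ)..u, (β * B + 1) * (|S k s - Sl s| + |I k s - Il s|) := by
              rw [intervalIntegral.integral_of_le hu0]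
          _ = (β * B + 1) * ∫ s in (0:ℝ)..u, (|S k s - Sl s| + |I k s - Il s|) :=
              intervalIntegral.integral_const_mul _ _
      -- bound the I-difference
      have hIdiff : I k u - Il u = (y k - yl)
          + ∫ s in (0:ℝ)..u, ((β * S k s * I k s - γ * I k s) - (β * Sl s * Il s - γ * Il s)) := by
        rw [(hsol k).2.2.2 u hu0, hsoll.2.2.2 u hu0, intervalIntegral.integral_sub hBk hBl]
        ring
      have hIbnd' : |∫ s in (0:ℝ)..u, ((β * S k s * I k s - γ * I k s) - (β * Sl s * Il s - γ * Il s))|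
          ≤ (β * B + γ) * ∫ s in (0:ℝ)..u, (|S k s - Sl s| + |I k s - Il s|) := by
        calc |∫ s in (0:ℝ)..u, ((β * S k s * I k s - γ * I k s) - (β * Sl s * Il s - γ * Il s))|
            ≤ ∫ s in (0:ℝ)..u, |(β * S k s * I k s - γ * I k s) - (β * Sl s * Il s - γ * Il s)| :=
              intervalIntegral.abs_integral_le_integral_abs hu0
          _ = ∫ s in Ioc 0 u, |(β * S k s * I k s - γ * I k s) - (β * Sl s * Il s - γ * Il s)| := by
              rw [intervalIntegral.integral_of_le hu0]
          _ ≤ ∫ s in Ioc 0 u, (β * B + γ) * (|S k s - Sl s| + |I k s - Il s|) := by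
              apply integral_mono_ae
                ((intervalIntegrable_iff_integrableOn_Ioc_of_le hu0).1 (hBk.sub hBl).abs)
                (hfInt.const_mul _)
              filter_upwards [ae_restrict_mem measurableSet_Ioc] with s hmem
              have hmem' : s ∈ Icc (0:ℝ) T := ⟨hmem.1.le, hmem.2.trans huT⟩
              have hb1 := (hbk k s hmem').1
              have hb2 := (hbl s hmem').2
              have hident : (β * S k s * I k s - γ * I k s) - (β * Sl s * Il s - γ * Il s)
                  = β * S k s * (I k s - Il s) + β * Il s * (S k s - Sl s)
                    - γ * (I k s - Il s) := by ring
              rw [hident]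
              have e1 : |β * S k s * (I k s - Il s)| ≤ β * B * |I k s - Il s| := by
                rw [abs_mul, abs_mul, abs_of_pos hβ]
                nlinarith [mul_nonneg (mul_nonneg hβ.le (sub_nonneg.2 hb1))
                  (abs_nonneg (I k s - Il s))]
              have e2 : |β * Il s * (S k s - Sl s)| ≤ β * B * |S k s - Sl s| := by
                rw [abs_mul, abs_mul, abs_of_pos hβ]
                nlinarith [mul_nonneg (mul_nonneg hβ.le (sub_nonneg.2 hb2))
                  (abs_nonneg (S k s - Sl s))]
              have e3 : |γ * (I k s - Il s)| = γ * |I k s - Il s| := by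
                rw [abs_mul, abs_of_pos hγ]
              have e4 : |β * S k s * (I k s - Il s) + β * Il s * (S k s - Sl s)
                  - γ * (I k s - Il s)|
                  ≤ |β * S k s * (I k s - Il s)| + |β * Il s * (S k s - Sl s)|
                    + |γ * (I k s - Il s)| := by
                have t1 := abs_sub (β * S k s * (I k s - Il s) + β * Il s * (S k s - Sl s))
                  (γ * (I k s - Il s))
                have t2 := abs_add_le (β * S k s * (I k s - Il s)) (β * Il s * (S k s - Sl s))
                linarith
              have hBB : 0 ≤ β * B := by positivity
              nlinarith [abs_nonneg (I k s - Il s), abs_nonneg (S k s - Sl s),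
                mul_nonneg hBB (abs_nonneg (S k s - Sl s))]
          _ = ∫ s in (0:ℝ)..u, (β * B + γ) * (|S k s - Sl s| + |I k s - Il s|) := by
              rw [intervalIntegral.integral_of_le hu0]
          _ = (β * B + γ) * ∫ s in (0:ℝ)..u, (|S k s - Sl s| + |I k s - Il s|) :=
              intervalIntegral.integral_const_mul _ _
      -- combine
      have hS1 : |S k u - Sl u| ≤ |x k - xl| + |∫ s in (0:ℝ)..u, H s| + |G k u| := by
        rw [hSdiff]
        calc |x k - xl - ((∫ s in (0:ℝ)..u, H s) + G k u)|
            ≤ |x k - xl| + |(∫ s in (0:ℝ)..u, H s) + G k u| := abs_sub _ _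
          _ ≤ _ := by linarith [abs_add_le (∫ s in (0:ℝ)..u, H s) (G k u)]
      have hI1 : |I k u - Il u| ≤ |y k - yl|
          + |∫ s in (0:ℝ)..u, ((β * S k s * I k s - γ * I k s) - (β * Sl s * Il s - γ * Il s))| := by
        rw [hIdiff]
        exact abs_add_le _ _
      have hGub := h3 u hu
      have hcomb : (β * B + 1) * (∫ s in (0:ℝ)..u, (|S k s - Sl s| + |I k s - Il s|))
          + (β * B + γ) * (∫ s in (0:ℝ)..u, (|S k s - Sl s| + |I k s - Il s|))
          = K * ∫ s in (0:ℝ)..u, (|S k s - Sl s| + |I k s - Il s|) := by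
        rw [hKdef]; ring
      linarith
    have key := gronwall_int hK.le (by positivity : (0:ℝ) ≤ 3 * ε') hfcont hle t ht
    have h6 : Real.exp (K * (t - 0)) ≤ E := by
      rw [hEdef]
      apply Real.exp_le_exp.2
      nlinarith [mul_le_mul_of_nonneg_left ht.2 hK.le]
    have h8 : 3 * ε' * (E + 1) = ε := by
      have hE1 : E + 1 ≠ 0 := by positivity
      rw [hε'def]
      field_simp
    nlinarith [key, h6, hε', hE]
  constructor
  · rw [Metric.tendstoUniformlyOn_iff]
    intro ε hε
    filter_upwards [claim ε hε] with k hk t ht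
    have h9 := hk t ht
    rw [Real.dist_eq, abs_sub_comm]
    linarith [abs_nonneg (I k t - Il t)]
  · rw [Metric.tendstoUniformlyOn_iff]
    intro ε hε
    filter_upwards [claim ε hε] with k hk t ht
    have h9 := hk t ht
    rw [Real.dist_eq, abs_sub_comm]
    linarith [abs_nonneg (S k t - Sl t)]
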